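/- Let M be a compact metrizable space, Y a compact metrizable space, θ : M × Y → M continuous, and ξ_y(m) := θ(m,y). Define α : C(M) → C(M × Y) by α(f)(m,y) = f(θ(m,y)), and let 𝒞 be the linear span of elements α(f)·(1 ⊗ ψ) with f ∈ C(M), ψ ∈ C(Y). Then 𝒞 is norm-dense in C(M × Y) if and only if ξ_y is injective for every y ∈ Y. -/

import Mathlib

open scoped Pointwise

/-- Let `M`, `Y` be compact metrizable spaces, `θ : M × Y → M` continuous,
`ξ_y := θ (·, y)`, `α f = f ∘ θ`, and `𝒞` the linear span of the functions
`α(f)·(1 ⊗ ψ) : (m, y) ↦ f (θ (m, y)) ψ (y)` with `f ∈ C(M)`, `ψ ∈ C(Y)`.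
Then `𝒞` is norm-dense in `C(M × Y)` if and only if `ξ_y` is injective for every `y`. -/
theorem span_action_dense_iff_injective
    (M Y : Type) [TopologicalSpace M] [CompactSpace M]
    [TopologicalSpace.MetrizableSpace M]
    [TopologicalSpace Y] [CompactSpace Y] [TopologicalSpace.MetrizableSpace Y]
    (θ : C(M × Y, M)) :
    Dense ((Submodule.span ℂ
        {g : C(M × Y, ℂ) | ∃ (f : C(M, ℂ)) (ψ : C(Y, ℂ)),
          ∀ p : M × Y, g p = f (θ p) * ψ p.2} : Submodule ℂ C(M × Y, ℂ)) : Set C(M × Y, ℂ))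
      ↔ ∀ y : Y, Function.Injective (fun m : M => θ (m, y)) := by
  set G : Set C(M × Y, ℂ) :=
    {g : C(M × Y, ℂ) | ∃ (f : C(M, ℂ)) (ψ : C(Y, ℂ)),
        ∀ p : M × Y, g p = f (θ p) * ψ p.2} with hG
  constructor
  · -- density implies injectivity
    intro hdense y
    by_contra hni
    rw [Function.Injective] at hni
    push_neg at hni
    obtain ⟨m₁, m₂, hθ, hm⟩ := hni
    -- the evaluation functional
    let Λ : C(M × Y, ℂ) →ₗ[ℂ] ℂ :=
      { toFun := fun g => g (m₁, y) - g (m₂, y)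
        map_add' := fun a b => by simp; ring
        map_smul' := fun c a => by simp; ring }
    have hΛcont : Continuous Λ := by
      exact ((continuous_eval_const (m₁, y)).sub
        (continuous_eval_const (m₂, y)))
    have hker : (Submodule.span ℂ G : Set C(M × Y, ℂ)) ⊆ {g | Λ g = 0} := by
      intro g hg
      refine Submodule.span_induction (fun g hg => ?_) (by simp) (fun a b _ _ ha hb => ?_)
        (fun c a _ ha => ?_) hg
      · obtain ⟨f, ψ, hfg⟩ := hg
        simp only [Set.mem_setOf_eq, Λ, LinearMap.coe_mk, AddHom.coe_mk]
        rw [hfg, hfg, hθ]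
        ring
      · simp only [Set.mem_setOf_eq, map_add] at ha hb ⊢
        simp [ha, hb]
      · simp only [Set.mem_setOf_eq, map_smul] at ha ⊢
        simp [ha]
    have hall : ∀ g : C(M × Y, ℂ), Λ g = 0 := by
      intro g
      have hcl : closure (Submodule.span ℂ G : Set C(M × Y, ℂ)) ⊆ {g | Λ g = 0} :=
        closure_minimal hker (isClosed_eq hΛcont continuous_const)
      have := hdense.closure_eq
      rw [this] at hcl
      exact hcl (Set.mem_univ g)
    -- get a function separating the two points
    letI := TopologicalSpace.metrizableSpaceMetric (M × Y)
    have hne : ((m₁, y) : M × Y) ≠ (m₂, y) := by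
      simp [Prod.ext_iff, hm]
    let g : C(M × Y, ℂ) :=
      ⟨fun p => (dist p (m₂, y) : ℂ), by
        exact Complex.continuous_ofReal.comp (continuous_id.dist continuous_const)⟩
    have := hall g
    simp only [Λ, LinearMap.coe_mk, AddHom.coe_mk, g, ContinuousMap.coe_mk] at this
    rw [dist_self, sub_eq_zero] at this
    have : dist ((m₁, y) : M × Y) (m₂, y) = 0 := by exact_mod_cast this
    exact hne (dist_eq_zero.mp this)
  · -- injectivity implies density
    intro hinj
    -- the span is a star subalgebra
    have hone : (1 : C(M × Y, ℂ)) ∈ G := ⟨1, 1, fun p => by simp⟩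
    have hmulG : G * G ⊆ G := by
      rintro x ⟨a, ha, b, hb, rfl⟩
      obtain ⟨f₁, ψ₁, h₁⟩ := ha
      obtain ⟨f₂, ψ₂, h₂⟩ := hb
      exact ⟨f₁ * f₂, ψ₁ * ψ₂, fun p => by simp [h₁ p, h₂ p]; ring⟩
    have hmul : ∀ a ∈ Submodule.span ℂ G, ∀ b ∈ Submodule.span ℂ G,
        a * b ∈ Submodule.span ℂ G := by
      intro a ha b hb
      have : a * b ∈ Submodule.span ℂ G * Submodule.span ℂ G :=
        Submodule.mul_mem_mul ha hb
      rw [Submodule.span_mul_span] at this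
      exact Submodule.span_mono hmulG this
    have hstar : ∀ a ∈ Submodule.span ℂ G, star a ∈ Submodule.span ℂ G := by
      intro a ha
      refine Submodule.span_induction (fun g hg => ?_) (by simp) (fun x y _ _ hx hy => ?_)
        (fun c x _ hx => ?_) ha
      · obtain ⟨f, ψ, hfg⟩ := hg
        refine Submodule.subset_span ⟨star f, star ψ, fun p => ?_⟩
        simp [hfg p]
      · rw [star_add]; exact Submodule.add_mem _ hx hy
      · rw [star_smul]; exact Submodule.smul_mem _ _ hx
    let S : StarSubalgebra ℂ C(M × Y, ℂ) :=
      { carrier := (Submodule.span ℂ G : Set C(M × Y, ℂ))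
        mul_mem' := fun {a b} ha hb => hmul a ha b hb
        add_mem' := fun {a b} ha hb => Submodule.add_mem _ ha hb
        one_mem' := Submodule.subset_span hone
        zero_mem' := Submodule.zero_mem _
        algebraMap_mem' := fun c => by
          have : (algebraMap ℂ C(M × Y, ℂ)) c = c • (1 : C(M × Y, ℂ)) := by
            simp [Algebra.algebraMap_eq_smul_one]
          rw [this]
          exact Submodule.smul_mem _ _ (Submodule.subset_span hone)
        star_mem' := fun {a} ha => hstar a ha }
    have hsep : S.SeparatesPoints := by
      rintro ⟨m₁, y₁⟩ ⟨m₂, y₂⟩ hne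
      by_cases hy : y₁ = y₂
      · subst hy
        have hm : m₁ ≠ m₂ := fun h => hne (by rw [h])
        have hθ : θ (m₁, y₁) ≠ θ (m₂, y₁) := fun h => hm (hinj y₁ h)
        letI := TopologicalSpace.metrizableSpaceMetric M
        let f : C(M, ℂ) := ⟨fun m => (dist m (θ (m₂, y₁)) : ℂ),
          Complex.continuous_ofReal.comp (continuous_id.dist continuous_const)⟩
        have hf : f (θ (m₁, y₁)) ≠ f (θ (m₂, y₁)) := by
          simp only [f, ContinuousMap.coe_mk, dist_self, Complex.ofReal_zero, ne_eq,
            Complex.ofReal_eq_zero, dist_eq_zero]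
          exact hθ
        refine ⟨_, ⟨f.comp θ, Submodule.subset_span ⟨f, 1, fun p => by simp⟩, rfl⟩, ?_⟩
        simpa using hf
      · letI := TopologicalSpace.metrizableSpaceMetric Y
        let ψ : C(Y, ℂ) := ⟨fun z => (dist z y₂ : ℂ),
          Complex.continuous_ofReal.comp (continuous_id.dist continuous_const)⟩
        have hψ : ψ y₁ ≠ ψ y₂ := by
          simp only [ψ, ContinuousMap.coe_mk, dist_self, Complex.ofReal_zero, ne_eq,
            Complex.ofReal_eq_zero, dist_eq_zero]
          exact hy
        refine ⟨_, ⟨(ψ.comp ⟨Prod.snd, continuous_snd⟩),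
          Submodule.subset_span ⟨1, ψ, fun p => by simp⟩, rfl⟩, ?_⟩
        simpa using hψ
    have htop := ContinuousMap.starSubalgebra_topologicalClosure_eq_top_of_separatesPoints S hsep
    have : closure ((Submodule.span ℂ G : Submodule ℂ C(M × Y, ℂ)) : Set C(M × Y, ℂ))
        = Set.univ := by
      have := congrArg (fun A : StarSubalgebra ℂ C(M × Y, ℂ) => (A : Set C(M × Y, ℂ))) htop
      simpa [StarSubalgebra.topologicalClosure, S] using this
    rw [dense_iff_closure_eq, this]
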